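/- arXiv:2603.27678 — 7 statements merged into one kernel-verified Lean document; each statement's English description precedes it below -/
import Mathlib

section
/- Let W be a closed convex subset of a real inner product space, let F : W's ambient space → ℝ be convex on W, let η > 0, and let x ∈ W. Suppose x⁺ ∈ W minimizes the regularized objective, i.e., for all w ∈ W, F(x⁺) + (1/(2η))‖x⁺ − x‖² ≤ F(w) + (1/(2η))‖w − x‖². Then for every u ∈ W, F(x⁺) − F(u) ≤ (1/(2η)) (‖u − x‖² − ‖u − x⁺‖² − ‖x⁺ − x‖²). -/
/-- Proximal three-point inequality: if `x⁺ ∈ W` minimizes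
`w ↦ F w + (1/(2η)) ‖w - x‖²` over a closed convex set `W`, then for all `u ∈ W`,
`F x⁺ - F u ≤ (1/(2η)) (‖u - x‖² - ‖u - x⁺‖² - ‖x⁺ - x‖²)`. -/
theorem proximal_three_point_inequality
    {E : Type*} [NormedAddCommGroup E] [InnerProductSpace ℝ E]
    (W : Set E) (hWclosed : IsClosed W) (hWconv : Convex ℝ W)
    (F : E → ℝ) (hF : ConvexOn ℝ W F)
    (η : ℝ) (hη : 0 < η)
    (x : E) (hx : x ∈ W)
    (xp : E) (hxp : xp ∈ W)
    (hmin : ∀ w ∈ W, F xp + (1 / (2 * η)) * ‖xp - x‖ ^ 2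
      ≤ F w + (1 / (2 * η)) * ‖w - x‖ ^ 2) :
    ∀ u ∈ W, F xp - F u
      ≤ (1 / (2 * η)) * (‖u - x‖ ^ 2 - ‖u - xp‖ ^ 2 - ‖xp - x‖ ^ 2) := by
  intro u hu
  set c : ℝ := 1 / (2 * η) with hc
  have hcpos : 0 < c := by positivity
  have key : ∀ t : ℝ, 0 < t → t ≤ 1 →
      F xp - F u ≤ 2 * c * (inner ℝ (xp - x) (u - xp) : ℝ) + t * (c * ‖u - xp‖ ^ 2) := by
    intro t ht ht1
    have hw : (1 - t) • xp + t • u ∈ W := hWconv hxp hu (by linarith) ht.le (by ring)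
    have h1 := hmin _ hw
    have h2 := hF.2 hxp hu (by linarith : (0:ℝ) ≤ 1 - t) ht.le (by ring)
    have hnorm : ‖(1 - t) • xp + t • u - x‖ ^ 2
        = ‖xp - x‖ ^ 2 + 2 * t * (inner ℝ (xp - x) (u - xp) : ℝ) + t ^ 2 * ‖u - xp‖ ^ 2 := by
      have h : (1 - t) • xp + t • u - x = (xp - x) + t • (u - xp) := by module
      rw [h, norm_add_sq_real, real_inner_smul_right, norm_smul]
      simp [abs_of_pos ht]
      ring
    rw [hnorm] at h1
    have h3 : t * (F xp - F u)
        ≤ t * (2 * c * (inner ℝ (xp - x) (u - xp) : ℝ) + t * (c * ‖u - xp‖ ^ 2)) := by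
      simp only [smul_eq_mul] at h2
      nlinarith [h1, h2]
    exact le_of_mul_le_mul_left h3 ht
  have hK : 0 ≤ c * ‖u - xp‖ ^ 2 := by positivity
  have main : F xp - F u ≤ 2 * c * (inner ℝ (xp - x) (u - xp) : ℝ) := by
    apply le_of_forall_pos_le_add
    intro ε hε
    set K : ℝ := c * ‖u - xp‖ ^ 2 with hKdef
    have htpos : 0 < min 1 (ε / (K + 1)) := lt_min one_pos (by positivity)
    have h := key _ htpos (min_le_left _ _)
    have hle : min 1 (ε / (K + 1)) * K ≤ ε := by
      have h1 : min 1 (ε / (K + 1)) * K ≤ (ε / (K + 1)) * K :=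
        mul_le_mul_of_nonneg_right (min_le_right _ _) hK
      have h2 : (ε / (K + 1)) * K ≤ ε := by
        rw [div_mul_eq_mul_div, div_le_iff₀ (by positivity)]
        nlinarith
      linarith
    linarith
  have hexp : ‖u - x‖ ^ 2
      = ‖u - xp‖ ^ 2 + 2 * (inner ℝ (u - xp) (xp - x) : ℝ) + ‖xp - x‖ ^ 2 := by
    have h : u - x = (u - xp) + (xp - x) := by abel
    rw [h, norm_add_sq_real]
  have hsym : (inner ℝ (u - xp) (xp - x) : ℝ) = (inner ℝ (xp - x) (u - xp) : ℝ) :=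
    real_inner_comm _ _
  have heq : ‖u - x‖ ^ 2 - ‖u - xp‖ ^ 2 - ‖xp - x‖ ^ 2
      = 2 * (inner ℝ (xp - x) (u - xp) : ℝ) := by rw [hexp, hsym]; ring
  rw [heq]
  linarith
end

section
/- Let W be a nonempty closed convex subset of ℝ^d with diameter at most D (i.e., ‖w − w'‖ ≤ D for all w, w' ∈ W). Let η > 0, let F_1, …, F_T be convex real-valued functions, let w_0 ∈ W, and for each t = 1, …, T let w_t ∈ W satisfy the proximal optimality condition: for all w ∈ W, F_t(w_t) + (1/(2η))‖w_t − w_{t−1}‖² ≤ F_t(w) + (1/(2η))‖w − w_{t−1}‖². Then for every comparator sequence u_1, …, u_T ∈ W, the dynamic regret satisfies Σ_{t=1}^{T} (F_t(w_t) − F_t(u_t)) ≤ (1/(2η))‖u_1 − w_0‖² + (D/η) Σ_{t=2}^{T} ‖u_t − u_{t−1}‖. -/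
open scoped RealInnerProductSpace

private lemma norm_combo_aux {E : Type*} [NormedAddCommGroup E] [InnerProductSpace ℝ E]
    (a b : E) (l : ℝ) :
    ‖(1-l)•a + l•b‖^2 = (1-l)*‖a‖^2 + l*‖b‖^2 - l*(1-l)*‖a-b‖^2 := by
  rw [norm_add_sq_real, norm_sub_sq_real, norm_smul, norm_smul,
    real_inner_smul_left, real_inner_smul_right, mul_pow, mul_pow]
  simp only [Real.norm_eq_abs, sq_abs]
  ring

private lemma round_aux {E : Type*} [NormedAddCommGroup E] [InnerProductSpace ℝ E]
    (c : ℝ) (hc : 0 < c) (Ft : E → ℝ) (hFt : ConvexOn ℝ Set.univ Ft)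
    (W : Set E) (hWconv : Convex ℝ W) (wt wp ut : E) (hwt : wt ∈ W) (hut : ut ∈ W)
    (hopt : ∀ v ∈ W, Ft wt + c * ‖wt - wp‖^2 ≤ Ft v + c * ‖v - wp‖^2) :
    Ft wt - Ft ut ≤ c * (‖ut - wp‖^2 - ‖ut - wt‖^2) := by
  apply le_of_forall_pos_le_add
  intro ε hε
  set K : ℝ := c * ‖ut - wt‖^2 with hK
  have hK0 : 0 ≤ K := by positivity
  set l : ℝ := if K = 0 then 1 else min 1 (ε / K) with hl
  have hl0 : 0 < l := by
    rw [hl]; split_ifs with h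
    · norm_num
    · exact lt_min one_pos (div_pos hε (lt_of_le_of_ne hK0 (Ne.symm h)))
  have hl1 : l ≤ 1 := by
    rw [hl]; split_ifs with h
    · exact le_refl 1
    · exact min_le_left _ _
  have hlK : l * K ≤ ε := by
    rw [hl]; split_ifs with h
    · simp [h]; linarith
    · have hKpos : 0 < K := lt_of_le_of_ne hK0 (Ne.symm h)
      calc min 1 (ε / K) * K ≤ (ε / K) * K := by
            apply mul_le_mul_of_nonneg_right (min_le_right _ _) hK0
        _ = ε := by field_simp
  set v : E := (1 - l) • wt + l • ut with hv
  have hvW : v ∈ W := hWconv hwt hut (by linarith) (le_of_lt hl0) (by ring)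
  have hopt' := hopt v hvW
  have hco : Ft v ≤ (1 - l) * Ft wt + l * Ft ut :=
    hFt.2 (Set.mem_univ wt) (Set.mem_univ ut) (by linarith) (le_of_lt hl0) (by ring)
  have hveq : v - wp = (1 - l) • (wt - wp) + l • (ut - wp) := by
    rw [hv]; module
  have hab : (wt - wp) - (ut - wp) = -(ut - wt) := by module
  have hnorm : ‖v - wp‖^2 = (1-l)*‖wt - wp‖^2 + l*‖ut - wp‖^2 - l*(1-l)*‖ut - wt‖^2 := by
    rw [hveq, norm_combo_aux, hab, norm_neg]
  have hA : 0 ≤ c * ‖wt - wp‖^2 := by positivity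
  have h3 : Ft wt + c * ‖wt - wp‖^2 ≤ (1-l)*Ft wt + l*Ft ut
      + c*((1-l)*‖wt - wp‖^2 + l*‖ut - wp‖^2 - l*(1-l)*‖ut - wt‖^2) := by
    calc Ft wt + c * ‖wt - wp‖^2 ≤ Ft v + c * ‖v - wp‖^2 := hopt'
      _ = Ft v + c*((1-l)*‖wt - wp‖^2 + l*‖ut - wp‖^2 - l*(1-l)*‖ut - wt‖^2) := by
          rw [hnorm]
      _ ≤ _ := by linarith [hco]
  have key : l * (Ft wt - Ft ut)
      ≤ l * (c * ‖ut - wp‖^2 - c * ‖wt - wp‖^2 - (1-l) * (c * ‖ut - wt‖^2)) := by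
    nlinarith [h3]
  have key2 : Ft wt - Ft ut
      ≤ c * ‖ut - wp‖^2 - c * ‖wt - wp‖^2 - (1-l) * (c * ‖ut - wt‖^2) :=
    le_of_mul_le_mul_left (by linarith [key]) hl0
  have hlK' : l * (c * ‖ut - wt‖^2) ≤ ε := hlK
  nlinarith [key2, hlK', hA]

private lemma tele_aux (D : ℝ) (p q del : ℕ → ℝ) :
    ∀ n, 1 ≤ n →
    (∀ t, 1 ≤ t → t ≤ n → 0 ≤ q t ∧ q t ≤ D) →
    (∀ t, 2 ≤ t → t ≤ n → p t ≤ q (t-1) + del t ∧ 0 ≤ p t ∧ p t ≤ D ∧ 0 ≤ del t) →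
    ∑ t ∈ Finset.Icc 1 n, (p t^2 - q t^2)
      ≤ p 1^2 + (∑ t ∈ Finset.Icc 2 n, 2*D*del t) - q n^2 := by
  intro n hn
  induction n, hn using Nat.le_induction with
  | base =>
    intro _ _
    rw [show Finset.Icc 1 1 = {1} by rfl, Finset.Icc_eq_empty (by omega)]
    simp
  | succ n hn ih =>
    intro hq hp
    have ih' := ih (fun t h1 h2 => hq t h1 (by omega)) (fun t h1 h2 => hp t h1 (by omega))
    rw [Finset.sum_Icc_succ_top (by omega : 1 ≤ n + 1),
        Finset.sum_Icc_succ_top (by omega : 2 ≤ n + 1)]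
    have hpn := hp (n+1) (by omega) (le_refl _)
    have hqn := hq n (by omega) (by omega)
    have hqn1 := hq (n+1) (by omega) (le_refl _)
    have hstep : p (n+1)^2 - q n^2 ≤ 2*D*del (n+1) := by
      obtain ⟨h1, h2, h3, h4⟩ := hpn
      simp only [Nat.add_sub_cancel] at h1
      rcases le_or_gt (p (n+1)) (q n) with h | h
      · have : p (n+1)^2 ≤ q n^2 := by nlinarith [hqn.1]
        have hD0 : 0 ≤ D := le_trans hqn.1 hqn.2
        nlinarith
      · have hmul : (p (n+1) - q n) * (p (n+1) + q n) ≤ del (n+1) * (2*D) := by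
          apply mul_le_mul (by linarith) (by linarith [hqn.2]) (by linarith [hqn.1]) h4
        nlinarith
    linarith [ih', hstep, hqn1.1]

/-- Dynamic regret bound (path-length form) for the regularized online proximal
update on a nonempty closed convex set of diameter at most `D`. -/
theorem dynamic_regret_path_length
    {d : ℕ} (W : Set (EuclideanSpace ℝ (Fin d)))
    (hWne : W.Nonempty) (hWclosed : IsClosed W) (hWconv : Convex ℝ W)
    (D : ℝ) (hD : ∀ w ∈ W, ∀ w' ∈ W, ‖w - w'‖ ≤ D)
    (η : ℝ) (hη : 0 < η)
    (T : ℕ)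
    (F : ℕ → EuclideanSpace ℝ (Fin d) → ℝ)
    (hF : ∀ t ∈ Finset.Icc 1 T, ConvexOn ℝ Set.univ (F t))
    (w : ℕ → EuclideanSpace ℝ (Fin d))
    (hw0 : w 0 ∈ W)
    (hwmem : ∀ t ∈ Finset.Icc 1 T, w t ∈ W)
    (hwopt : ∀ t ∈ Finset.Icc 1 T, ∀ v ∈ W,
      F t (w t) + (1 / (2 * η)) * ‖w t - w (t - 1)‖ ^ 2
        ≤ F t v + (1 / (2 * η)) * ‖v - w (t - 1)‖ ^ 2)
    (u : ℕ → EuclideanSpace ℝ (Fin d))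
    (hu : ∀ t ∈ Finset.Icc 1 T, u t ∈ W) :
    ∑ t ∈ Finset.Icc 1 T, (F t (w t) - F t (u t))
      ≤ (1 / (2 * η)) * ‖u 1 - w 0‖ ^ 2
        + (D / η) * ∑ t ∈ Finset.Icc 2 T, ‖u t - u (t - 1)‖ := by
  set c : ℝ := 1 / (2 * η) with hcdef
  have hc : 0 < c := by positivity
  by_cases hT : T = 0
  · subst hT
    simp only [show Finset.Icc 1 0 = (∅ : Finset ℕ) from Finset.Icc_eq_empty (by omega),
      show Finset.Icc 2 0 = (∅ : Finset ℕ) from Finset.Icc_eq_empty (by omega),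
      Finset.sum_empty, mul_zero, add_zero]
    positivity
  have hT1 : 1 ≤ T := by omega
  set p : ℕ → ℝ := fun t => ‖u t - w (t-1)‖ with hp
  set q : ℕ → ℝ := fun t => ‖u t - w t‖ with hq'
  set del : ℕ → ℝ := fun t => ‖u t - u (t-1)‖ with hdel
  have hround : ∀ t ∈ Finset.Icc 1 T,
      F t (w t) - F t (u t) ≤ c * (p t ^ 2 - q t ^ 2) := by
    intro t ht
    exact round_aux c hc (F t) (hF t ht) W hWconv (w t) (w (t-1)) (u t)
      (hwmem t ht) (hu t ht) (fun v hv => hwopt t ht v hv)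
  have hqh : ∀ t, 1 ≤ t → t ≤ T → 0 ≤ q t ∧ q t ≤ D := by
    intro t h1 h2
    have ht : t ∈ Finset.Icc 1 T := Finset.mem_Icc.mpr ⟨h1, h2⟩
    exact ⟨norm_nonneg _, hD (u t) (hu t ht) (w t) (hwmem t ht)⟩
  have hph : ∀ t, 2 ≤ t → t ≤ T →
      p t ≤ q (t-1) + del t ∧ 0 ≤ p t ∧ p t ≤ D ∧ 0 ≤ del t := by
    intro t h2 hT'
    have ht : t ∈ Finset.Icc 1 T := Finset.mem_Icc.mpr ⟨by omega, hT'⟩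
    have ht' : t - 1 ∈ Finset.Icc 1 T := Finset.mem_Icc.mpr ⟨by omega, by omega⟩
    refine ⟨?_, norm_nonneg _, hD (u t) (hu t ht) (w (t-1)) (hwmem (t-1) ht'), norm_nonneg _⟩
    have triangle : u t - w (t-1) = (u (t-1) - w (t-1)) + (u t - u (t-1)) := by abel
    calc p t = ‖(u (t-1) - w (t-1)) + (u t - u (t-1))‖ := by
          simp only [hp]; rw [triangle]
      _ ≤ ‖u (t-1) - w (t-1)‖ + ‖u t - u (t-1)‖ := norm_add_le _ _
      _ = q (t-1) + del t := rfl
  have htele := tele_aux D p q del T hT1 hqh hph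
  have hqT0 : 0 ≤ q T ^ 2 := sq_nonneg _
  calc ∑ t ∈ Finset.Icc 1 T, (F t (w t) - F t (u t))
      ≤ ∑ t ∈ Finset.Icc 1 T, c * (p t ^ 2 - q t ^ 2) := Finset.sum_le_sum hround
    _ = c * ∑ t ∈ Finset.Icc 1 T, (p t ^ 2 - q t ^ 2) := (Finset.mul_sum _ _ _).symm
    _ ≤ c * (p 1 ^ 2 + (∑ t ∈ Finset.Icc 2 T, 2*D*del t) - q T ^ 2) :=
        mul_le_mul_of_nonneg_left htele hc.le
    _ ≤ c * (p 1 ^ 2 + (∑ t ∈ Finset.Icc 2 T, 2*D*del t)) := by nlinarith [hqT0, hc]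
    _ = c * p 1 ^ 2 + c * (2 * D * ∑ t ∈ Finset.Icc 2 T, del t) := by
        rw [← Finset.mul_sum]; ring
    _ = c * ‖u 1 - w 0‖ ^ 2 + (D / η) * ∑ t ∈ Finset.Icc 2 T, ‖u t - u (t - 1)‖ := by
        have hη0 : η ≠ 0 := ne_of_gt hη
        have h2Dc : c * (2 * D) = D / η := by rw [hcdef]; field_simp
        simp only [hp, hdel]
        rw [show c * (2 * D * ∑ t ∈ Finset.Icc 2 T, ‖u t - u (t - 1)‖)
            = (c * (2 * D)) * ∑ t ∈ Finset.Icc 2 T, ‖u t - u (t - 1)‖ by ring, h2Dc]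
end

section
/- Let W be a nonempty closed convex subset of ℝ^d with diameter at most D, let η > 0, let F_1, …, F_T be convex real-valued functions, let w_0 ∈ W, and for each t let w_t ∈ W be a minimizer over W of w ↦ F_t(w) + (1/(2η))‖w − w_{t−1}‖². For each t let w_t⋆ ∈ W be a minimizer of F_t over W. Then Σ_{t=1}^{T} (F_t(w_t) − F_t(w_t⋆)) ≤ (1/(2η))‖w_1⋆ − w_0‖² + (D/η) Σ_{t=2}^{T} ‖w_t⋆ − w_{t−1}⋆‖. -/
open RealInnerProductSpace

/-- Key prox inequality: if `m` minimizes `F + c‖· - u‖²` over convex `W` with `F` convex,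
then the minimum is attained with a strong-convexity slack `c‖v - m‖²`. -/
lemma prox_strong_ineq {d : ℕ} (W : Set (EuclideanSpace ℝ (Fin d)))
    (hWconv : Convex ℝ W)
    (F : EuclideanSpace ℝ (Fin d) → ℝ) (hF : ConvexOn ℝ Set.univ F)
    (c : ℝ) (hc : 0 ≤ c) (u m : EuclideanSpace ℝ (Fin d)) (hm : m ∈ W)
    (hopt : ∀ v ∈ W, F m + c * ‖m - u‖ ^ 2 ≤ F v + c * ‖v - u‖ ^ 2)
    (v : EuclideanSpace ℝ (Fin d)) (hv : v ∈ W) :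
    F m + c * ‖m - u‖ ^ 2 + c * ‖v - m‖ ^ 2 ≤ F v + c * ‖v - u‖ ^ 2 := by
  set I : ℝ := ⟪m - u, v - m⟫ with hI
  set N : ℝ := ‖v - m‖ ^ 2 with hN
  have hN0 : 0 ≤ N := by positivity
  -- Key gradient-type inequality: F m ≤ F v + 2 c I
  have key : F m ≤ F v + 2 * c * I := by
    apply le_of_forall_pos_le_add
    intro ε hε
    set l : ℝ := min 1 (ε / (c * N + 1)) with hl
    have hden : (0:ℝ) < c * N + 1 := by positivity
    have hl0 : 0 < l := lt_min one_pos (by positivity)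
    have hl1 : l ≤ 1 := min_le_left _ _
    have hwl : (1 - l) • m + l • v ∈ W :=
      hWconv hm hv (by linarith) hl0.le (by ring)
    have hopt' := hopt _ hwl
    have hconv : F ((1 - l) • m + l • v) ≤ (1 - l) * F m + l * F v :=
      hF.2 (Set.mem_univ m) (Set.mem_univ v) (by linarith) hl0.le (by ring)
    have hexp : ‖((1 - l) • m + l • v) - u‖ ^ 2 = ‖m - u‖ ^ 2 + 2 * l * I + l ^ 2 * N := by
      have heq : ((1 - l) • m + l • v) - u = (m - u) + l • (v - m) := by
        module
      rw [heq, norm_add_sq_real, real_inner_smul_right, norm_smul, Real.norm_eq_abs,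
        abs_of_pos hl0, hI, hN]
      ring
    rw [hexp] at hopt'
    have hmul : l * F m ≤ l * (F v + 2 * c * I + c * l * N) := by nlinarith
    have hdiv : F m ≤ F v + 2 * c * I + c * l * N :=
      le_of_mul_le_mul_left hmul hl0
    have hsmall : c * l * N ≤ ε := by
      have hlle : l ≤ ε / (c * N + 1) := min_le_right _ _
      have h1 : c * N * l ≤ c * N * (ε / (c * N + 1)) :=
        mul_le_mul_of_nonneg_left hlle (by positivity)
      have h2 : c * N * (ε / (c * N + 1)) ≤ ε := by
        rw [mul_comm, div_mul_eq_mul_div, div_le_iff₀ hden]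
        nlinarith
      nlinarith
    linarith
  -- Expand ‖v - u‖² and conclude
  have hvu : ‖v - u‖ ^ 2 = N + 2 * ⟪v - m, m - u⟫ + ‖m - u‖ ^ 2 := by
    have heq : v - u = (v - m) + (m - u) := by abel
    rw [heq, norm_add_sq_real, hN]
  have hsym : ⟪v - m, m - u⟫ = I := real_inner_comm _ _
  rw [hvu, hsym]
  linarith

/-- Telescoping sum lemma. -/
lemma telescope_aux (A B s : ℕ → ℝ) :
    ∀ T : ℕ, 1 ≤ T → (∀ t ∈ Finset.Icc 2 T, A t ≤ B (t - 1) + s t) →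
      ∑ t ∈ Finset.Icc 1 T, (A t - B t) ≤ A 1 - B T + ∑ t ∈ Finset.Icc 2 T, s t := by
  intro T hT
  induction T, hT using Nat.le_induction with
  | base =>
    intro _
    simp
  | succ T hT ih =>
    intro h2
    have h2' : ∀ t ∈ Finset.Icc 2 T, A t ≤ B (t - 1) + s t := by
      intro t ht
      exact h2 t (Finset.mem_Icc.2 ⟨(Finset.mem_Icc.1 ht).1, (Finset.mem_Icc.1 ht).2.trans (Nat.le_succ T)⟩)
    have hstep : A (T + 1) ≤ B T + s (T + 1) := by
      have := h2 (T + 1) (Finset.mem_Icc.2 ⟨by omega, le_refl _⟩)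
      simpa using this
    rw [Finset.sum_Icc_succ_top (by omega : 1 ≤ T + 1),
        Finset.sum_Icc_succ_top (by omega : 2 ≤ T + 1)]
    have := ih h2'
    linarith

/-- Dynamic regret bound against the per-round minimizers `w_t⋆` of `F_t` over `W`. -/
theorem dynamic_regret_vs_per_round_minimizers
    {d : ℕ} (W : Set (EuclideanSpace ℝ (Fin d)))
    (hWne : W.Nonempty) (hWclosed : IsClosed W) (hWconv : Convex ℝ W)
    (D : ℝ) (hD : ∀ w ∈ W, ∀ w' ∈ W, ‖w - w'‖ ≤ D)
    (η : ℝ) (hη : 0 < η)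
    (T : ℕ)
    (F : ℕ → EuclideanSpace ℝ (Fin d) → ℝ)
    (hF : ∀ t ∈ Finset.Icc 1 T, ConvexOn ℝ Set.univ (F t))
    (w : ℕ → EuclideanSpace ℝ (Fin d))
    (hw0 : w 0 ∈ W)
    (hwmem : ∀ t ∈ Finset.Icc 1 T, w t ∈ W)
    (hwopt : ∀ t ∈ Finset.Icc 1 T, ∀ v ∈ W,
      F t (w t) + (1 / (2 * η)) * ‖w t - w (t - 1)‖ ^ 2
        ≤ F t v + (1 / (2 * η)) * ‖v - w (t - 1)‖ ^ 2)
    (wstar : ℕ → EuclideanSpace ℝ (Fin d))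
    (hwstarmem : ∀ t ∈ Finset.Icc 1 T, wstar t ∈ W)
    (hwstaropt : ∀ t ∈ Finset.Icc 1 T, ∀ v ∈ W, F t (wstar t) ≤ F t v) :
    ∑ t ∈ Finset.Icc 1 T, (F t (w t) - F t (wstar t))
      ≤ (1 / (2 * η)) * ‖wstar 1 - w 0‖ ^ 2
        + (D / η) * ∑ t ∈ Finset.Icc 2 T, ‖wstar t - wstar (t - 1)‖ := by
  set c : ℝ := 1 / (2 * η) with hc
  have hc0 : 0 ≤ c := by positivity
  have hD0 : 0 ≤ D := by
    obtain ⟨x, hx⟩ := hWne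
    have := hD x hx x hx
    simpa using this
  rcases Nat.eq_zero_or_pos T with hT0 | hT1
  · subst hT0
    rw [show Finset.Icc 1 0 = ∅ from rfl, show Finset.Icc 2 0 = ∅ from rfl]
    simp only [Finset.sum_empty, mul_zero, add_zero]
    positivity
  -- Per-round quantities
  set A : ℕ → ℝ := fun t => c * ‖wstar t - w (t - 1)‖ ^ 2 with hA
  set B : ℕ → ℝ := fun t => c * ‖wstar t - w t‖ ^ 2 with hB
  set s : ℕ → ℝ := fun t => (D / η) * ‖wstar t - wstar (t - 1)‖ with hs
  -- per-round regret bound from prox strong inequality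
  have h1 : ∀ t ∈ Finset.Icc 1 T, F t (w t) - F t (wstar t) ≤ A t - B t := by
    intro t ht
    have hstrong := prox_strong_ineq W hWconv (F t) (hF t ht) c hc0 (w (t - 1)) (w t)
      (hwmem t ht) (hwopt t ht) (wstar t) (hwstarmem t ht)
    have : 0 ≤ c * ‖w t - w (t - 1)‖ ^ 2 := by positivity
    simp only [hA, hB]
    linarith
  -- telescoping step inequality
  have h2 : ∀ t ∈ Finset.Icc 2 T, A t ≤ B (t - 1) + s t := by
    intro t ht
    obtain ⟨ht2, htT⟩ := Finset.mem_Icc.1 ht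
    have ht1 : t - 1 ∈ Finset.Icc 1 T := Finset.mem_Icc.2 ⟨by omega, by omega⟩
    have htIcc : t ∈ Finset.Icc 1 T := Finset.mem_Icc.2 ⟨by omega, htT⟩
    have heq : (t - 1) - 1 = t - 2 := by omega
    set x : ℝ := ‖wstar t - w (t - 1)‖ with hx
    set y : ℝ := ‖wstar (t - 1) - w (t - 1)‖ with hy
    set z : ℝ := ‖wstar t - wstar (t - 1)‖ with hz
    have hx0 : 0 ≤ x := norm_nonneg _
    have hy0 : 0 ≤ y := norm_nonneg _
    have hz0 : 0 ≤ z := norm_nonneg _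
    have hxD : x ≤ D := hD _ (hwstarmem t htIcc) _ (hwmem (t - 1) ht1)
    have hyD : y ≤ D := hD _ (hwstarmem (t - 1) ht1) _ (hwmem (t - 1) ht1)
    have htri : x ≤ z + y := by
      have : wstar t - w (t - 1) = (wstar t - wstar (t - 1)) + (wstar (t - 1) - w (t - 1)) := by
        abel
      rw [hx, this]
      exact norm_add_le _ _
    have hxy : x ^ 2 - y ^ 2 ≤ 2 * D * z := by nlinarith
    have hcD : c * (2 * D) = D / η := by
      rw [hc]; field_simp
    simp only [hA, hB, hs]
    have : c * (x ^ 2 - y ^ 2) ≤ c * (2 * D * z) :=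
      mul_le_mul_of_nonneg_left hxy hc0
    calc c * x ^ 2 ≤ c * y ^ 2 + c * (2 * D) * z := by nlinarith
      _ = c * y ^ 2 + (D / η) * z := by rw [hcD]
    -- note goal uses B (t-1) with argument (t-1)
  have htel := telescope_aux A B s T hT1 h2
  have hBT : 0 ≤ B T := by positivity
  have hsum1 : ∑ t ∈ Finset.Icc 1 T, (F t (w t) - F t (wstar t))
      ≤ ∑ t ∈ Finset.Icc 1 T, (A t - B t) := Finset.sum_le_sum h1
  have hA1 : A 1 = c * ‖wstar 1 - w 0‖ ^ 2 := by simp [hA]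
  have hsums : ∑ t ∈ Finset.Icc 2 T, s t
      = (D / η) * ∑ t ∈ Finset.Icc 2 T, ‖wstar t - wstar (t - 1)‖ := by
    rw [Finset.mul_sum]
  calc ∑ t ∈ Finset.Icc 1 T, (F t (w t) - F t (wstar t))
      ≤ ∑ t ∈ Finset.Icc 1 T, (A t - B t) := hsum1
    _ ≤ A 1 - B T + ∑ t ∈ Finset.Icc 2 T, s t := htel
    _ ≤ A 1 + ∑ t ∈ Finset.Icc 2 T, s t := by linarith
    _ = c * ‖wstar 1 - w 0‖ ^ 2
        + (D / η) * ∑ t ∈ Finset.Icc 2 T, ‖wstar t - wstar (t - 1)‖ := by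
        rw [hA1, hsums]
end

section
/- Let W be a nonempty closed convex subset of a real inner product space, F a convex real-valued function, η > 0, and x ∈ W. If x⁺ ∈ W minimizes w ↦ F(w) + (1/(2η))‖w − x‖² over W, then for every u ∈ W, F(x⁺) − F(u) ≤ (1/(2η)) (‖u − x‖² − ‖u − x⁺‖²). -/
/-- Relaxed proximal inequality: if `x⁺ ∈ W` minimizes
`w ↦ F w + (1/(2η)) ‖w - x‖²` over a nonempty closed convex set `W`, then for all
`u ∈ W`, `F x⁺ - F u ≤ (1/(2η)) (‖u - x‖² - ‖u - x⁺‖²)`. -/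
theorem proximal_relaxed_inequality
    {E : Type*} [NormedAddCommGroup E] [InnerProductSpace ℝ E]
    (W : Set E) (hWne : W.Nonempty) (hWclosed : IsClosed W) (hWconv : Convex ℝ W)
    (F : E → ℝ) (hF : ConvexOn ℝ W F)
    (η : ℝ) (hη : 0 < η)
    (x : E) (hx : x ∈ W)
    (xp : E) (hxp : xp ∈ W)
    (hmin : ∀ w ∈ W, F xp + (1 / (2 * η)) * ‖xp - x‖ ^ 2
      ≤ F w + (1 / (2 * η)) * ‖w - x‖ ^ 2) :
    ∀ u ∈ W, F xp - F u
      ≤ (1 / (2 * η)) * (‖u - x‖ ^ 2 - ‖u - xp‖ ^ 2) := by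
  intro u hu
  set c : ℝ := 1 / (2 * η) with hc
  have hcpos : 0 < c := by positivity
  -- key inequality for every t ∈ (0,1]
  have key : ∀ t : ℝ, 0 < t → t ≤ 1 →
      F xp - F u ≤ c * (‖u - x‖ ^ 2 - ‖u - xp‖ ^ 2) + t * (c * ‖u - xp‖ ^ 2) := by
    intro t ht ht1
    have h1t : (0:ℝ) ≤ 1 - t := by linarith
    set w : E := (1 - t) • xp + t • u with hw
    have hwW : w ∈ W := hWconv hxp hu h1t ht.le (by ring)
    have hconv : F w ≤ (1 - t) * F xp + t * F u := hF.2 hxp hu h1t ht.le (by ring)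
    have hmw := hmin w hwW
    have hwx : w - x = (xp - x) + t • (u - xp) := by
      rw [hw]; module
    have hnorm : ‖w - x‖ ^ 2 = ‖xp - x‖ ^ 2
        + 2 * (t * inner ℝ (xp - x) (u - xp)) + t ^ 2 * ‖u - xp‖ ^ 2 := by
      rw [hwx, @norm_add_sq_real, real_inner_smul_right, norm_smul]
      rw [Real.norm_eq_abs]
      rw [mul_pow, sq_abs]
    -- three point identity
    have h3 : ‖u - x‖ ^ 2 = ‖u - xp‖ ^ 2 + 2 * inner ℝ (u - xp) (xp - x) + ‖xp - x‖ ^ 2 := by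
      have : u - x = (u - xp) + (xp - x) := by abel
      rw [this, @norm_add_sq_real]
    have hsym : inner ℝ (xp - x) (u - xp) = (inner ℝ (u - xp) (xp - x) : ℝ) :=
      real_inner_comm _ _
    have hmain : t * (F xp - F u) ≤
        c * (2 * (t * inner ℝ (xp - x) (u - xp)) + t ^ 2 * ‖u - xp‖ ^ 2) := by
      nlinarith [hmw, hconv, hnorm]
    have hdiv : F xp - F u ≤
        c * (2 * inner ℝ (xp - x) (u - xp) + t * ‖u - xp‖ ^ 2) := by
      have := mul_le_mul_of_nonneg_left hmain (le_of_lt (inv_pos.mpr ht))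
      rw [← sub_nonneg] at this ⊢
      have ht' : t ≠ 0 := ne_of_gt ht
      field_simp at this
      nlinarith [this]
    have hsq : (0:ℝ) ≤ ‖xp - x‖ ^ 2 := by positivity
    nlinarith [hdiv, h3, hsym, hsq]
  -- take t → 0
  refine le_of_forall_pos_le_add ?_
  intro ε hε
  set B : ℝ := c * ‖u - xp‖ ^ 2 with hB
  have hBnn : 0 ≤ B := by positivity
  set t : ℝ := min 1 (ε / (B + 1)) with htdef
  have ht0 : 0 < t := lt_min one_pos (by positivity)
  have ht1 : t ≤ 1 := min_le_left _ _
  have htB : t * B ≤ ε := by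
    have h1 : t ≤ ε / (B + 1) := min_le_right _ _
    have : t * B ≤ (ε / (B + 1)) * B :=
      mul_le_mul_of_nonneg_right h1 hBnn
    have h2 : (ε / (B + 1)) * B ≤ ε := by
      rw [div_mul_eq_mul_div, div_le_iff₀ (by linarith)]
      nlinarith
    linarith
  have := key t ht0 ht1
  linarith
end

section
/- Let A be a real matrix such that H := AᵀA is symmetric with μI ≼ H ≼ LI, 0 < μ ≤ L, and let λ ≥ 0. For t ∈ {1, 2}, let b_t ∈ ℝ^m, c_t ∈ ℝ^{d_ℓ}, u_t∘ := H^{-1}Aᵀb_t, and u_t⋆ := (H + λI)^{-1}(Aᵀb_t + λc_t). Then ‖u_2⋆ − u_1⋆‖ ≤ (L/(μ + λ)) ‖u_2∘ − u_1∘‖ + (λ/(μ + λ)) ‖c_2 − c_1‖. -/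
open Matrix
open scoped RealInnerProductSpace

section Aux

section Aux
variable {n p q : ℕ}

private lemma aux_quad_nonneg {M : Matrix (Fin n) (Fin n) ℝ} (hM : M.PosSemidef)
    (v : EuclideanSpace ℝ (Fin n)) : 0 ≤ ⟪v, toEuclideanLin M v⟫ := by
  have := hM.dotProduct_mulVec_nonneg (WithLp.equiv 2 _ v)
  simpa [toEuclideanLin_apply, PiLp.inner_apply, dotProduct, mulVec, mul_comm] using this

private lemma aux_inner_left (M : Matrix (Fin n) (Fin p) ℝ)
    (x : EuclideanSpace ℝ (Fin p)) (y : EuclideanSpace ℝ (Fin n)) :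
    ⟪toEuclideanLin M x, y⟫ = ⟪x, toEuclideanLin Mᵀ y⟫ := by
  have h : Mᵀ = Mᴴ := (conjTranspose_eq_transpose_of_trivial M).symm
  rw [h, toEuclideanLin_conjTranspose_eq_adjoint, LinearMap.adjoint_inner_right]

private lemma aux_mul (M : Matrix (Fin n) (Fin p) ℝ) (N : Matrix (Fin p) (Fin q) ℝ)
    (v : EuclideanSpace ℝ (Fin q)) :
    toEuclideanLin (M * N) v = toEuclideanLin M (toEuclideanLin N v) := by
  simp [toEuclideanLin_apply, mulVec_mulVec]

private lemma aux_one (v : EuclideanSpace ℝ (Fin n)) :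
    toEuclideanLin (1 : Matrix (Fin n) (Fin n) ℝ) v = v := by
  simp [toEuclideanLin_apply]

private lemma aux_quad_ge {M : Matrix (Fin n) (Fin n) ℝ} {α : ℝ}
    (h : (M - α • (1 : Matrix (Fin n) (Fin n) ℝ)).PosSemidef) (v : EuclideanSpace ℝ (Fin n)) :
    α * ‖v‖ ^ 2 ≤ ⟪v, toEuclideanLin M v⟫ := by
  have h0 := aux_quad_nonneg h v
  have h1 : toEuclideanLin (M - α • (1 : Matrix (Fin n) (Fin n) ℝ)) v
      = toEuclideanLin M v - α • v := by
    rw [map_sub, _root_.map_smul]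
    simp [aux_one]
  rw [h1, inner_sub_right, inner_smul_right, real_inner_self_eq_norm_sq] at h0
  linarith

private lemma aux_quad_le {M : Matrix (Fin n) (Fin n) ℝ} {α : ℝ}
    (h : (α • (1 : Matrix (Fin n) (Fin n) ℝ) - M).PosSemidef) (v : EuclideanSpace ℝ (Fin n)) :
    ⟪v, toEuclideanLin M v⟫ ≤ α * ‖v‖ ^ 2 := by
  have h0 := aux_quad_nonneg h v
  have h1 : toEuclideanLin (α • (1 : Matrix (Fin n) (Fin n) ℝ) - M) v
      = α • v - toEuclideanLin M v := by
    rw [map_sub, _root_.map_smul]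
    simp [aux_one]
  rw [h1, inner_sub_right, inner_smul_right, real_inner_self_eq_norm_sq] at h0
  linarith

private lemma aux_posDef {M : Matrix (Fin n) (Fin n) ℝ} {α : ℝ} (hα : 0 < α)
    (hsym : M.IsHermitian)
    (h : (M - α • (1 : Matrix (Fin n) (Fin n) ℝ)).PosSemidef) : M.PosDef := by
  refine PosDef.of_dotProduct_mulVec_pos hsym (fun x hx => ?_)
  set v : EuclideanSpace ℝ (Fin n) := (WithLp.equiv 2 _).symm x with hv
  have hvne : v ≠ 0 := by
    simpa [hv] using hx
  have h2 : (0:ℝ) < α * ‖v‖ ^ 2 := by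
    have := norm_pos_iff.mpr hvne
    positivity
  have h3 := aux_quad_ge h v
  have h4 : ⟪v, toEuclideanLin M v⟫ = star x ⬝ᵥ (M *ᵥ x) := by
    simp [hv, toEuclideanLin_apply, PiLp.inner_apply, dotProduct, mulVec, mul_comm]
  linarith [h4 ▸ h3.trans_lt' h2]

private lemma aux_inv_bound {M : Matrix (Fin n) (Fin n) ℝ} {α : ℝ} (hα : 0 < α)
    (hsym : M.IsHermitian)
    (h : (M - α • (1 : Matrix (Fin n) (Fin n) ℝ)).PosSemidef)
    (z : EuclideanSpace ℝ (Fin n)) :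
    α * ‖toEuclideanLin M⁻¹ z‖ ≤ ‖z‖ := by
  have hpd := aux_posDef hα hsym h
  have hdet : IsUnit M.det := hpd.det_pos.ne'.isUnit
  set v := toEuclideanLin M⁻¹ z with hv
  have hMv : toEuclideanLin M v = z := by
    rw [hv, ← aux_mul, mul_nonsing_inv _ hdet, aux_one]
  have h1 : α * ‖v‖ ^ 2 ≤ ⟪v, z⟫ := hMv ▸ aux_quad_ge h v
  have h2 : ⟪v, z⟫ ≤ ‖v‖ * ‖z‖ := real_inner_le_norm v z
  rcases eq_or_lt_of_le (norm_nonneg v) with h3 | h3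
  · rw [← h3]
    simpa using norm_nonneg z
  · have := h1.trans h2
    rw [pow_two, ← mul_assoc, mul_comm ‖v‖ ‖z‖] at this
    exact le_of_mul_le_mul_right this h3

private lemma aux_normA {m dl : ℕ} (A : Matrix (Fin m) (Fin dl) ℝ) {L : ℝ} (hL : 0 ≤ L)
    (hupp : (L • (1 : Matrix (Fin dl) (Fin dl) ℝ) - Aᵀ * A).PosSemidef)
    (x : EuclideanSpace ℝ (Fin dl)) :
    ‖toEuclideanLin A x‖ ≤ Real.sqrt L * ‖x‖ := by
  have h1 : ‖toEuclideanLin A x‖ ^ 2 ≤ L * ‖x‖ ^ 2 := by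
    have he : ⟪toEuclideanLin A x, toEuclideanLin A x⟫
        = ⟪x, toEuclideanLin (Aᵀ * A) x⟫ := by
      rw [aux_inner_left, aux_mul]
    have h2 := aux_quad_le hupp x
    rwa [← he, real_inner_self_eq_norm_sq] at h2
  calc ‖toEuclideanLin A x‖ = Real.sqrt (‖toEuclideanLin A x‖ ^ 2) :=
        (Real.sqrt_sq (norm_nonneg _)).symm
    _ ≤ Real.sqrt (L * ‖x‖ ^ 2) := Real.sqrt_le_sqrt h1
    _ = Real.sqrt L * ‖x‖ := by rw [Real.sqrt_mul hL, Real.sqrt_sq (norm_nonneg _)]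

private lemma aux_normAT {m dl : ℕ} (A : Matrix (Fin m) (Fin dl) ℝ) {L : ℝ} (hL : 0 ≤ L)
    (hupp : (L • (1 : Matrix (Fin dl) (Fin dl) ℝ) - Aᵀ * A).PosSemidef)
    (w : EuclideanSpace ℝ (Fin m)) :
    ‖toEuclideanLin Aᵀ w‖ ≤ Real.sqrt L * ‖w‖ := by
  set u := toEuclideanLin Aᵀ w with hu
  have h1 : ⟪u, u⟫ = ⟪w, toEuclideanLin A u⟫ := by
    have h := aux_inner_left Aᵀ w u
    rwa [transpose_transpose] at h
  have h2 : ‖u‖ ^ 2 ≤ ‖w‖ * (Real.sqrt L * ‖u‖) := by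
    have h3 : ⟪w, toEuclideanLin A u⟫ ≤ ‖w‖ * ‖toEuclideanLin A u‖ := real_inner_le_norm _ _
    have h4 := aux_normA A hL hupp u
    have h5 : ‖w‖ * ‖toEuclideanLin A u‖ ≤ ‖w‖ * (Real.sqrt L * ‖u‖) :=
      mul_le_mul_of_nonneg_left h4 (norm_nonneg w)
    calc ‖u‖ ^ 2 = ⟪u, u⟫ := (real_inner_self_eq_norm_sq u).symm
      _ = ⟪w, toEuclideanLin A u⟫ := h1
      _ ≤ _ := h3.trans h5
  rcases eq_or_lt_of_le (norm_nonneg u) with h6 | h6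
  · rw [← h6]
    positivity
  · have h7 : ‖u‖ * ‖u‖ ≤ Real.sqrt L * ‖w‖ * ‖u‖ := by
      rw [← pow_two]
      calc ‖u‖ ^ 2 ≤ ‖w‖ * (Real.sqrt L * ‖u‖) := h2
        _ = Real.sqrt L * ‖w‖ * ‖u‖ := by ring
    exact le_of_mul_le_mul_right h7 h6

private lemma aux_normH {m dl : ℕ} (A : Matrix (Fin m) (Fin dl) ℝ) {L : ℝ} (hL : 0 ≤ L)
    (hupp : (L • (1 : Matrix (Fin dl) (Fin dl) ℝ) - Aᵀ * A).PosSemidef)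
    (x : EuclideanSpace ℝ (Fin dl)) :
    ‖toEuclideanLin (Aᵀ * A) x‖ ≤ L * ‖x‖ := by
  rw [aux_mul]
  calc ‖toEuclideanLin Aᵀ (toEuclideanLin A x)‖
      ≤ Real.sqrt L * ‖toEuclideanLin A x‖ := aux_normAT A hL hupp _
    _ ≤ Real.sqrt L * (Real.sqrt L * ‖x‖) :=
        mul_le_mul_of_nonneg_left (aux_normA A hL hupp x) (Real.sqrt_nonneg L)
    _ = Real.sqrt L * Real.sqrt L * ‖x‖ := by ring
    _ = L * ‖x‖ := by rw [Real.mul_self_sqrt hL]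


end Aux

/-- Anchor-induced contraction of the optimal step: with `H = AᵀA`, `μI ≼ H ≼ LI`,
`0 < μ ≤ L`, and `λ ≥ 0`,
`‖u₂⋆ - u₁⋆‖ ≤ (L/(μ+λ))‖u₂∘ - u₁∘‖ + (λ/(μ+λ))‖c₂ - c₁‖`. -/
theorem anchored_step_contraction
    {m dl : ℕ} (A : Matrix (Fin m) (Fin dl) ℝ)
    (μ L lam : ℝ) (hμ : 0 < μ) (hμL : μ ≤ L) (hlam : 0 ≤ lam)
    (hlow : (Aᵀ * A - μ • (1 : Matrix (Fin dl) (Fin dl) ℝ)).PosSemidef)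
    (hupp : (L • (1 : Matrix (Fin dl) (Fin dl) ℝ) - Aᵀ * A).PosSemidef)
    (b₁ b₂ : EuclideanSpace ℝ (Fin m)) (c₁ c₂ : EuclideanSpace ℝ (Fin dl)) :
    ‖Matrix.toEuclideanLin (Aᵀ * A + lam • (1 : Matrix (Fin dl) (Fin dl) ℝ))⁻¹
        (Matrix.toEuclideanLin Aᵀ b₂ + lam • c₂)
      - Matrix.toEuclideanLin (Aᵀ * A + lam • (1 : Matrix (Fin dl) (Fin dl) ℝ))⁻¹
        (Matrix.toEuclideanLin Aᵀ b₁ + lam • c₁)‖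
    ≤ (L / (μ + lam)) *
        ‖Matrix.toEuclideanLin (Aᵀ * A)⁻¹ (Matrix.toEuclideanLin Aᵀ b₂)
          - Matrix.toEuclideanLin (Aᵀ * A)⁻¹ (Matrix.toEuclideanLin Aᵀ b₁)‖
      + (lam / (μ + lam)) * ‖c₂ - c₁‖ := by
  have hL : (0:ℝ) ≤ L := le_of_lt (hμ.trans_le hμL)
  have hml : (0:ℝ) < μ + lam := by linarith
  set H := Aᵀ * A with hH
  set Mm := H + lam • (1 : Matrix (Fin dl) (Fin dl) ℝ) with hMm
  have hsymH : H.IsHermitian := by simpa using isHermitian_conjTranspose_mul_self A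
  have hsymM : Mm.IsHermitian := by
    have h1 : (lam • (1 : Matrix (Fin dl) (Fin dl) ℝ)).IsHermitian := by
      simp [Matrix.IsHermitian, conjTranspose_smul]
    exact hsymH.add h1
  have hlowM : (Mm - (μ + lam) • (1 : Matrix (Fin dl) (Fin dl) ℝ)).PosSemidef := by
    have he : Mm - (μ + lam) • (1 : Matrix (Fin dl) (Fin dl) ℝ)
        = H - μ • (1 : Matrix (Fin dl) (Fin dl) ℝ) := by
      rw [hMm, add_smul]; abel
    rw [he]; exact hlow
  have hHdet : IsUnit H.det := (aux_posDef hμ hsymH hlow).det_pos.ne'.isUnit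
  set x := toEuclideanLin H⁻¹ (toEuclideanLin Aᵀ b₂)
      - toEuclideanLin H⁻¹ (toEuclideanLin Aᵀ b₁) with hx
  set y := c₂ - c₁ with hy
  have hcomp : ∀ p : EuclideanSpace ℝ (Fin dl),
      toEuclideanLin H (toEuclideanLin H⁻¹ p) = p := by
    intro p
    rw [← aux_mul, mul_nonsing_inv _ hHdet, aux_one]
  have hHx : toEuclideanLin H x = toEuclideanLin Aᵀ b₂ - toEuclideanLin Aᵀ b₁ := by
    rw [hx, map_sub, hcomp, hcomp]
  have key : toEuclideanLin Mm⁻¹ (toEuclideanLin Aᵀ b₂ + lam • c₂)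
      - toEuclideanLin Mm⁻¹ (toEuclideanLin Aᵀ b₁ + lam • c₁)
      = toEuclideanLin Mm⁻¹ (toEuclideanLin H x) + lam • toEuclideanLin Mm⁻¹ y := by
    rw [← map_sub, ← _root_.map_smul, ← map_add]
    congr 1
    rw [hHx, hy, smul_sub]
    abel
  rw [key]
  have hb1 : (μ + lam) * ‖toEuclideanLin Mm⁻¹ (toEuclideanLin H x)‖
      ≤ ‖toEuclideanLin H x‖ := aux_inv_bound hml hsymM hlowM _
  have hb2 : ‖toEuclideanLin H x‖ ≤ L * ‖x‖ := aux_normH A hL hupp x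
  have hb3 : (μ + lam) * ‖toEuclideanLin Mm⁻¹ y‖ ≤ ‖y‖ := aux_inv_bound hml hsymM hlowM y
  have h1 : ‖toEuclideanLin Mm⁻¹ (toEuclideanLin H x)‖ ≤ L / (μ + lam) * ‖x‖ := by
    rw [div_mul_eq_mul_div, le_div_iff₀ hml]
    nlinarith
  have h2 : ‖lam • toEuclideanLin Mm⁻¹ y‖ ≤ lam / (μ + lam) * ‖y‖ := by
    rw [norm_smul, Real.norm_eq_abs, abs_of_nonneg hlam, div_mul_eq_mul_div, le_div_iff₀ hml]
    nlinarith
  calc ‖toEuclideanLin Mm⁻¹ (toEuclideanLin H x) + lam • toEuclideanLin Mm⁻¹ y‖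
      ≤ ‖toEuclideanLin Mm⁻¹ (toEuclideanLin H x)‖ + ‖lam • toEuclideanLin Mm⁻¹ y‖ :=
        norm_add_le _ _
    _ ≤ L / (μ + lam) * ‖x‖ + lam / (μ + lam) * ‖y‖ := add_le_add h1 h2
end Aux
end

section
/- Let A be a real matrix such that H := AᵀA is symmetric with μI ≼ H ≼ LI, 0 < μ ≤ L, and let λ ≥ 0. For t = 1, …, T let b_t ∈ ℝ^m, c_t ∈ ℝ^{d_ℓ}, u_t∘ := H^{-1}Aᵀb_t, and u_t⋆ := (H + λI)^{-1}(Aᵀb_t + λc_t). Then the anchored path length satisfies Σ_{t=2}^{T} ‖u_t⋆ − u_{t−1}⋆‖ ≤ (L/(μ + λ)) Σ_{t=2}^{T} ‖u_t∘ − u_{t−1}∘‖ + (λ/(μ + λ)) Σ_{t=2}^{T} ‖c_t − c_{t−1}‖. -/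
open Matrix

open scoped RealInnerProductSpace

private lemma toEuclideanLin_mul_apply {a b c : ℕ} (M : Matrix (Fin a) (Fin b) ℝ)
    (N : Matrix (Fin b) (Fin c) ℝ) (v : EuclideanSpace ℝ (Fin c)) :
    Matrix.toEuclideanLin (M * N) v = Matrix.toEuclideanLin M (Matrix.toEuclideanLin N v) := by
  simp [Matrix.toEuclideanLin_apply, Matrix.mulVec_mulVec]

private lemma toEuclideanLin_one_apply {a : ℕ} (v : EuclideanSpace ℝ (Fin a)) :
    Matrix.toEuclideanLin (1 : Matrix (Fin a) (Fin a) ℝ) v = v := by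
  simp [Matrix.toEuclideanLin_apply, Matrix.one_mulVec]

private lemma dot_eq_inner {a : ℕ} (u v : Fin a → ℝ) :
    u ⬝ᵥ v = ⟪(WithLp.equiv 2 (Fin a → ℝ)).symm u, (WithLp.equiv 2 (Fin a → ℝ)).symm v⟫ := by
  simp [PiLp.inner_apply, dotProduct, mul_comm]

private lemma euc_inner_mulVec {a : ℕ} (M : Matrix (Fin a) (Fin a) ℝ)
    (x y : EuclideanSpace ℝ (Fin a)) :
    ⟪x, Matrix.toEuclideanLin M y⟫ =
      (WithLp.equiv 2 (Fin a → ℝ) x) ⬝ᵥ (M *ᵥ (WithLp.equiv 2 (Fin a → ℝ) y)) := by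
  simp [Matrix.toEuclideanLin_apply, PiLp.inner_apply, dotProduct, mul_comm]

private lemma posDef_of_lower {a : ℕ} (H : Matrix (Fin a) (Fin a) ℝ) (μ : ℝ) (hμ : 0 < μ)
    (hlow : (H - μ • 1).PosSemidef) : H.PosDef := by
  rw [Matrix.posDef_iff_dotProduct_mulVec]
  constructor
  · have h1 := hlow.1
    have h2 : (μ • (1 : Matrix (Fin a) (Fin a) ℝ)).IsHermitian := by
      ext i j
      simp [Matrix.conjTranspose_apply, Matrix.one_apply]
      split <;> simp_all [eq_comm]
    have := h1.add h2
    simpa using this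
  · intro v hv
    have h0 := hlow.dotProduct_mulVec_nonneg v
    have hvv : 0 < v ⬝ᵥ v := by
      rcases Function.ne_iff.mp hv with ⟨i, hi⟩
      have hle : (v i)^2 ≤ v ⬝ᵥ v := by
        rw [dotProduct]
        have : ∀ j, 0 ≤ v j * v j := fun j => mul_self_nonneg _
        calc (v i)^2 = v i * v i := sq (v i)
        _ ≤ ∑ j, v j * v j := Finset.single_le_sum (fun j _ => this j) (Finset.mem_univ i)
      nlinarith [pow_pos (abs_pos.mpr hi) 2, sq_abs (v i)]
    have hexp : (star v) ⬝ᵥ ((H - μ • 1) *ᵥ v) = v ⬝ᵥ (H *ᵥ v) - μ * (v ⬝ᵥ v) := by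
      simp [Matrix.sub_mulVec, Matrix.smul_mulVec, Matrix.one_mulVec, dotProduct_sub,
        dotProduct_smul, smul_eq_mul]
    rw [hexp] at h0
    have : star v ⬝ᵥ H *ᵥ v = v ⬝ᵥ H *ᵥ v := by simp
    rw [this]
    nlinarith

private lemma anchored_step {m dl : ℕ} (A : Matrix (Fin m) (Fin dl) ℝ)
    (μ L lam : ℝ) (hμ : 0 < μ) (hμL : μ ≤ L) (hlam : 0 ≤ lam)
    (hlow : (Aᵀ * A - μ • (1 : Matrix (Fin dl) (Fin dl) ℝ)).PosSemidef)
    (hupp : (L • (1 : Matrix (Fin dl) (Fin dl) ℝ) - Aᵀ * A).PosSemidef)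
    (x y : EuclideanSpace ℝ (Fin dl)) :
    ‖Matrix.toEuclideanLin (Aᵀ * A + lam • (1 : Matrix (Fin dl) (Fin dl) ℝ))⁻¹
        (Matrix.toEuclideanLin (Aᵀ * A) x + lam • y)‖
      ≤ L / (μ + lam) * ‖x‖ + lam / (μ + lam) * ‖y‖ := by
  have hν : 0 < μ + lam := by linarith
  have hL : (0:ℝ) ≤ L := by linarith
  set H : Matrix (Fin dl) (Fin dl) ℝ := Aᵀ * A with hHdef
  set K : Matrix (Fin dl) (Fin dl) ℝ := H + lam • 1 with hKdef
  have hKlow : (K - (μ + lam) • (1 : Matrix (Fin dl) (Fin dl) ℝ)).PosSemidef := by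
    have : K - (μ + lam) • (1 : Matrix (Fin dl) (Fin dl) ℝ) = H - μ • 1 := by
      rw [hKdef, add_smul]; abel
    rw [this]; exact hlow
  have hKpd : K.PosDef := posDef_of_lower K (μ + lam) hν hKlow
  have hKu : IsUnit K.det := isUnit_iff_ne_zero.mpr hKpd.det_pos.ne'
  have hKinv : K * K⁻¹ = 1 := Matrix.mul_nonsing_inv _ hKu
  set w : EuclideanSpace ℝ (Fin dl) :=
    Matrix.toEuclideanLin K⁻¹ (Matrix.toEuclideanLin H x + lam • y) with hw
  show ‖w‖ ≤ _
  have hKw : Matrix.toEuclideanLin K w = Matrix.toEuclideanLin H x + lam • y := by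
    rw [hw, ← toEuclideanLin_mul_apply, hKinv, toEuclideanLin_one_apply]
  -- expand toEuclideanLin K w
  have hKexp : Matrix.toEuclideanLin K w = Matrix.toEuclideanLin H w + lam • w := by
    rw [hKdef, map_add]
    simp only [LinearMap.add_apply, _root_.map_smul, LinearMap.smul_apply,
      toEuclideanLin_one_apply]
  -- lower quadratic bound
  have hHquad : μ * ‖w‖^2 ≤ ⟪w, Matrix.toEuclideanLin H w⟫ := by
    have h0 := hlow.dotProduct_mulVec_nonneg (WithLp.equiv 2 (Fin dl → ℝ) w)
    have hdd : (WithLp.equiv 2 (Fin dl → ℝ) w) ⬝ᵥ (WithLp.equiv 2 (Fin dl → ℝ) w) = ‖w‖^2 := by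
      rw [dot_eq_inner, Equiv.symm_apply_apply]; exact real_inner_self_eq_norm_sq w
    have hH : (WithLp.equiv 2 (Fin dl → ℝ) w) ⬝ᵥ (H *ᵥ (WithLp.equiv 2 (Fin dl → ℝ) w))
        = ⟪w, Matrix.toEuclideanLin H w⟫ := (euc_inner_mulVec H w w).symm
    simp only [Matrix.sub_mulVec, Matrix.smul_mulVec, Matrix.one_mulVec,
      dotProduct_sub, dotProduct_smul, smul_eq_mul, star_trivial] at h0
    rw [hH, hdd] at h0
    linarith
  have hKquad : (μ + lam) * ‖w‖^2 ≤ ⟪w, Matrix.toEuclideanLin K w⟫ := by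
    rw [hKexp, inner_add_right, real_inner_smul_right, real_inner_self_eq_norm_sq]
    nlinarith
  -- upper bound on cross term
  have hAx : ∀ z : EuclideanSpace ℝ (Fin dl),
      ‖(WithLp.equiv 2 (Fin m → ℝ)).symm (A *ᵥ (WithLp.equiv 2 (Fin dl → ℝ) z))‖
        ≤ Real.sqrt L * ‖z‖ := by
    intro z
    set q := (WithLp.equiv 2 (Fin m → ℝ)).symm (A *ᵥ (WithLp.equiv 2 (Fin dl → ℝ) z)) with hq
    have h0 := hupp.dotProduct_mulVec_nonneg (WithLp.equiv 2 (Fin dl → ℝ) z)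
    have hdd : (WithLp.equiv 2 (Fin dl → ℝ) z) ⬝ᵥ (WithLp.equiv 2 (Fin dl → ℝ) z) = ‖z‖^2 := by
      rw [dot_eq_inner, Equiv.symm_apply_apply]; exact real_inner_self_eq_norm_sq z
    have hqq : (WithLp.equiv 2 (Fin dl → ℝ) z) ⬝ᵥ ((Aᵀ * A) *ᵥ (WithLp.equiv 2 (Fin dl → ℝ) z))
        = ‖q‖^2 := by
      rw [← Matrix.mulVec_mulVec, Matrix.dotProduct_mulVec, Matrix.vecMul_transpose,
        dot_eq_inner, ← hq]
      exact real_inner_self_eq_norm_sq q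
    simp only [Matrix.sub_mulVec, Matrix.smul_mulVec, Matrix.one_mulVec,
      dotProduct_sub, dotProduct_smul, smul_eq_mul, star_trivial] at h0
    rw [hqq, hdd] at h0
    have h1 : ‖q‖^2 ≤ L * ‖z‖^2 := by linarith
    have h2 := Real.sqrt_le_sqrt h1
    rwa [Real.sqrt_sq (norm_nonneg q), Real.sqrt_mul hL, Real.sqrt_sq (norm_nonneg z)] at h2
  have hcross : ⟪w, Matrix.toEuclideanLin H x⟫ ≤ L * (‖w‖ * ‖x‖) := by
    have hdot : ⟪w, Matrix.toEuclideanLin H x⟫ =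
        ⟪(WithLp.equiv 2 (Fin m → ℝ)).symm (A *ᵥ (WithLp.equiv 2 (Fin dl → ℝ) w)),
         (WithLp.equiv 2 (Fin m → ℝ)).symm (A *ᵥ (WithLp.equiv 2 (Fin dl → ℝ) x))⟫ := by
      rw [euc_inner_mulVec, hHdef, ← Matrix.mulVec_mulVec, Matrix.dotProduct_mulVec,
        Matrix.vecMul_transpose, dot_eq_inner]
    rw [hdot]
    calc _ ≤ ‖(WithLp.equiv 2 (Fin m → ℝ)).symm (A *ᵥ (WithLp.equiv 2 (Fin dl → ℝ) w))‖ *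
          ‖(WithLp.equiv 2 (Fin m → ℝ)).symm (A *ᵥ (WithLp.equiv 2 (Fin dl → ℝ) x))‖ :=
        real_inner_le_norm _ _
      _ ≤ (Real.sqrt L * ‖w‖) * (Real.sqrt L * ‖x‖) := by
          apply mul_le_mul (hAx w) (hAx x) (norm_nonneg _)
          positivity
      _ = L * (‖w‖ * ‖x‖) := by
          rw [show Real.sqrt L * ‖w‖ * (Real.sqrt L * ‖x‖)
              = (Real.sqrt L * Real.sqrt L) * (‖w‖ * ‖x‖) from by ring,
            Real.mul_self_sqrt hL]
  have hy : ⟪w, y⟫ ≤ ‖w‖ * ‖y‖ := real_inner_le_norm w y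
  have hmain : (μ + lam) * ‖w‖^2 ≤ ‖w‖ * (L * ‖x‖ + lam * ‖y‖) := by
    have h3 : ⟪w, Matrix.toEuclideanLin K w⟫ ≤ L * (‖w‖ * ‖x‖) + lam * (‖w‖ * ‖y‖) := by
      rw [hKw, inner_add_right, real_inner_smul_right]
      have := mul_le_mul_of_nonneg_left hy hlam
      linarith
    calc (μ + lam) * ‖w‖^2 ≤ ⟪w, Matrix.toEuclideanLin K w⟫ := hKquad
      _ ≤ L * (‖w‖ * ‖x‖) + lam * (‖w‖ * ‖y‖) := h3
      _ = ‖w‖ * (L * ‖x‖ + lam * ‖y‖) := by ring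
  rcases eq_or_lt_of_le (norm_nonneg w) with h0 | h0
  · rw [← h0]; positivity
  · have h4 : (μ + lam) * ‖w‖ ≤ L * ‖x‖ + lam * ‖y‖ := by
      nlinarith
    calc ‖w‖ ≤ (L * ‖x‖ + lam * ‖y‖) / (μ + lam) := (le_div_iff₀ hν).mpr (by linarith)
      _ = L / (μ + lam) * ‖x‖ + lam / (μ + lam) * ‖y‖ := by ring


/-- Anchor-induced contraction of the optimal path length: with `H = AᵀA`,
`μI ≼ H ≼ LI`, `0 < μ ≤ L`, and `λ ≥ 0`,
`Σ_{t=2}^T ‖u_t⋆ - u_{t-1}⋆‖ ≤ (L/(μ+λ)) Σ_{t=2}^T ‖u_t∘ - u_{t-1}∘‖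
  + (λ/(μ+λ)) Σ_{t=2}^T ‖c_t - c_{t-1}‖`. -/
theorem anchored_path_length_contraction
    {m dl : ℕ} (A : Matrix (Fin m) (Fin dl) ℝ)
    (μ L lam : ℝ) (hμ : 0 < μ) (hμL : μ ≤ L) (hlam : 0 ≤ lam)
    (hlow : (Aᵀ * A - μ • (1 : Matrix (Fin dl) (Fin dl) ℝ)).PosSemidef)
    (hupp : (L • (1 : Matrix (Fin dl) (Fin dl) ℝ) - Aᵀ * A).PosSemidef)
    (T : ℕ) (b : ℕ → EuclideanSpace ℝ (Fin m)) (c : ℕ → EuclideanSpace ℝ (Fin dl)) :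
    ∑ t ∈ Finset.Icc 2 T,
        ‖Matrix.toEuclideanLin (Aᵀ * A + lam • (1 : Matrix (Fin dl) (Fin dl) ℝ))⁻¹
            (Matrix.toEuclideanLin Aᵀ (b t) + lam • c t)
          - Matrix.toEuclideanLin (Aᵀ * A + lam • (1 : Matrix (Fin dl) (Fin dl) ℝ))⁻¹
            (Matrix.toEuclideanLin Aᵀ (b (t - 1)) + lam • c (t - 1))‖
    ≤ (L / (μ + lam)) * ∑ t ∈ Finset.Icc 2 T,
          ‖Matrix.toEuclideanLin (Aᵀ * A)⁻¹ (Matrix.toEuclideanLin Aᵀ (b t))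
            - Matrix.toEuclideanLin (Aᵀ * A)⁻¹ (Matrix.toEuclideanLin Aᵀ (b (t - 1)))‖
      + (lam / (μ + lam)) * ∑ t ∈ Finset.Icc 2 T, ‖c t - c (t - 1)‖ := by
  have hHpd : (Aᵀ * A).PosDef := posDef_of_lower _ μ hμ hlow
  have hHu : IsUnit (Aᵀ * A).det := isUnit_iff_ne_zero.mpr hHpd.det_pos.ne'
  have hHinv : (Aᵀ * A) * (Aᵀ * A)⁻¹ = 1 := Matrix.mul_nonsing_inv _ hHu
  set u : ℕ → EuclideanSpace ℝ (Fin dl) := fun t =>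
    Matrix.toEuclideanLin (Aᵀ * A)⁻¹ (Matrix.toEuclideanLin Aᵀ (b t)) with hu
  have hub : ∀ t, Matrix.toEuclideanLin Aᵀ (b t)
      = Matrix.toEuclideanLin (Aᵀ * A) (u t) := by
    intro t
    rw [hu]
    simp only
    rw [← toEuclideanLin_mul_apply, hHinv, toEuclideanLin_one_apply]
  calc ∑ t ∈ Finset.Icc 2 T,
        ‖Matrix.toEuclideanLin (Aᵀ * A + lam • (1 : Matrix (Fin dl) (Fin dl) ℝ))⁻¹
            (Matrix.toEuclideanLin Aᵀ (b t) + lam • c t)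
          - Matrix.toEuclideanLin (Aᵀ * A + lam • (1 : Matrix (Fin dl) (Fin dl) ℝ))⁻¹
            (Matrix.toEuclideanLin Aᵀ (b (t - 1)) + lam • c (t - 1))‖
      ≤ ∑ t ∈ Finset.Icc 2 T,
        (L / (μ + lam) * ‖u t - u (t - 1)‖ + lam / (μ + lam) * ‖c t - c (t - 1)‖) := by
        apply Finset.sum_le_sum
        intro t _
        have hkey : Matrix.toEuclideanLin (Aᵀ * A + lam • (1 : Matrix (Fin dl) (Fin dl) ℝ))⁻¹
              (Matrix.toEuclideanLin Aᵀ (b t) + lam • c t)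
            - Matrix.toEuclideanLin (Aᵀ * A + lam • (1 : Matrix (Fin dl) (Fin dl) ℝ))⁻¹
              (Matrix.toEuclideanLin Aᵀ (b (t - 1)) + lam • c (t - 1))
            = Matrix.toEuclideanLin (Aᵀ * A + lam • (1 : Matrix (Fin dl) (Fin dl) ℝ))⁻¹
              (Matrix.toEuclideanLin (Aᵀ * A) (u t - u (t - 1)) + lam • (c t - c (t - 1))) := by
          rw [← map_sub]
          congr 1
          rw [hub t, hub (t - 1), map_sub, smul_sub]
          abel
        rw [hkey]
        exact anchored_step A μ L lam hμ hμL hlam hlow hupp _ _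
    _ = (L / (μ + lam)) * ∑ t ∈ Finset.Icc 2 T, ‖u t - u (t - 1)‖
        + (lam / (μ + lam)) * ∑ t ∈ Finset.Icc 2 T, ‖c t - c (t - 1)‖ := by
        rw [Finset.sum_add_distrib, Finset.mul_sum, Finset.mul_sum]
end

section
/- Let W be a nonempty closed convex subset of ℝ^d with diameter at most D, let η > 0, let F_1, …, F_T be convex real-valued functions, let w_0 ∈ W, and for each t let w_t ∈ W be a minimizer over W of w ↦ F_t(w) + (1/(2η))‖w − w_{t−1}‖². Then for every comparator sequence u_1, …, u_T ∈ W, Σ_{t=1}^{T} (F_t(w_t) − F_t(u_t)) ≤ (1/(2η))‖u_1 − w_0‖² + (1/(2η)) Σ_{t=2}^{T} (‖u_t − w_{t−1}‖² − ‖u_{t−1} − w_{t−1}‖²). -/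
lemma sq_norm_combo {E : Type*} [NormedAddCommGroup E] [InnerProductSpace ℝ E]
    (a b c : E) (l : ℝ) :
    ‖((1-l) • a + l • b) - c‖^2
      = (1-l)*‖a-c‖^2 + l*‖b-c‖^2 - l*(1-l)*‖a-b‖^2 := by
  have h : ((1-l) • a + l • b) - c = (1-l) • (a-c) + l • (b-c) := by module
  have h2 : a - b = (a-c) - (b-c) := by abel
  rw [h, h2]
  generalize (a - c) = x
  generalize (b - c) = y
  rw [@norm_add_sq_real, @norm_sub_sq_real,
    real_inner_smul_left, real_inner_smul_right, norm_smul, norm_smul,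
    mul_pow, mul_pow, Real.norm_eq_abs, Real.norm_eq_abs, sq_abs, sq_abs]
  ring

lemma three_point {E : Type*} [NormedAddCommGroup E] [InnerProductSpace ℝ E]
    {W : Set E} (hWconv : Convex ℝ W) {f : E → ℝ} (hf : ConvexOn ℝ Set.univ f)
    (c : ℝ) {w0 wt : E} (hwt : wt ∈ W)
    (hmin : ∀ v ∈ W, f wt + c*‖wt - w0‖^2 ≤ f v + c*‖v - w0‖^2)
    {v : E} (hv : v ∈ W) :
    f wt + c*‖wt - w0‖^2 + c*‖v - wt‖^2 ≤ f v + c*‖v - w0‖^2 := by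
  have key : ∀ l ∈ Set.Ioo (0:ℝ) 1,
      f wt + c*‖wt - w0‖^2 + c*(1-l)*‖v - wt‖^2 ≤ f v + c*‖v - w0‖^2 := by
    intro l hl
    obtain ⟨hl0, hl1⟩ := hl
    have hp : (1-l) • wt + l • v ∈ W :=
      hWconv hwt hv (by linarith) (le_of_lt hl0) (by ring)
    have h1 := hmin _ hp
    have h2 : f ((1-l) • wt + l • v) ≤ (1-l) * f wt + l * f v :=
      hf.2 (Set.mem_univ wt) (Set.mem_univ v) (by linarith) (le_of_lt hl0) (by ring)
    have h3 := sq_norm_combo wt v w0 l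
    have h4 : ‖wt - v‖ = ‖v - wt‖ := norm_sub_rev _ _
    rw [h3, h4] at h1
    have h5 : l * (f wt + c*‖wt - w0‖^2 + c*(1-l)*‖v - wt‖^2)
        ≤ l * (f v + c*‖v - w0‖^2) := by nlinarith
    exact le_of_mul_le_mul_left h5 hl0
  have hmem : Set.Ioo (0:ℝ) 1 ∈ nhdsWithin (0:ℝ) (Set.Ioi 0) :=
    Ioo_mem_nhdsGT_of_mem ⟨le_refl _, one_pos⟩
  have htend : Filter.Tendsto
      (fun l : ℝ => f wt + c*‖wt - w0‖^2 + c*(1-l)*‖v - wt‖^2)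
      (nhdsWithin (0:ℝ) (Set.Ioi 0))
      (nhds (f wt + c*‖wt - w0‖^2 + c*(1-(0:ℝ))*‖v - wt‖^2)) := by
    apply Filter.Tendsto.mono_left _ nhdsWithin_le_nhds
    exact (Continuous.tendsto (by continuity) 0)
  have := le_of_tendsto htend (Filter.eventually_of_mem hmem (fun l hl => key l hl))
  simpa using this

lemma telesc (a b : ℕ → ℝ) : ∀ T : ℕ, 1 ≤ T →
    ∑ t ∈ Finset.Icc 1 T, (a t - b t)
      = a 1 + ∑ t ∈ Finset.Icc 2 T, (a t - b (t-1)) - b T := by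
  intro T hT
  induction T, hT using Nat.le_induction with
  | base => simp
  | succ T hT ih =>
    rw [Finset.sum_Icc_succ_top (by omega), Finset.sum_Icc_succ_top (by omega), ih]
    simp only [Nat.add_sub_cancel]
    ring

/-- Intermediate dynamic regret bound with the sum of squared-distance differences
on the right-hand side. -/
theorem dynamic_regret_sq_dist_form
    {d : ℕ} (W : Set (EuclideanSpace ℝ (Fin d)))
    (hWne : W.Nonempty) (hWclosed : IsClosed W) (hWconv : Convex ℝ W)
    (D : ℝ) (hD : ∀ w ∈ W, ∀ w' ∈ W, ‖w - w'‖ ≤ D)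
    (η : ℝ) (hη : 0 < η)
    (T : ℕ)
    (F : ℕ → EuclideanSpace ℝ (Fin d) → ℝ)
    (hF : ∀ t ∈ Finset.Icc 1 T, ConvexOn ℝ Set.univ (F t))
    (w : ℕ → EuclideanSpace ℝ (Fin d))
    (hw0 : w 0 ∈ W)
    (hwmem : ∀ t ∈ Finset.Icc 1 T, w t ∈ W)
    (hwopt : ∀ t ∈ Finset.Icc 1 T, ∀ v ∈ W,
      F t (w t) + (1 / (2 * η)) * ‖w t - w (t - 1)‖ ^ 2
        ≤ F t v + (1 / (2 * η)) * ‖v - w (t - 1)‖ ^ 2)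
    (u : ℕ → EuclideanSpace ℝ (Fin d))
    (hu : ∀ t ∈ Finset.Icc 1 T, u t ∈ W) :
    ∑ t ∈ Finset.Icc 1 T, (F t (w t) - F t (u t))
      ≤ (1 / (2 * η)) * ‖u 1 - w 0‖ ^ 2
        + (1 / (2 * η)) * ∑ t ∈ Finset.Icc 2 T,
            (‖u t - w (t - 1)‖ ^ 2 - ‖u (t - 1) - w (t - 1)‖ ^ 2) := by
  set c : ℝ := 1 / (2 * η) with hc
  have hcpos : 0 < c := by positivity
  set a : ℕ → ℝ := fun t => ‖u t - w (t - 1)‖ ^ 2 with ha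
  set b : ℕ → ℝ := fun t => ‖u t - w t‖ ^ 2 with hb
  have hstep : ∀ t ∈ Finset.Icc 1 T, F t (w t) - F t (u t) ≤ c * (a t - b t) := by
    intro t ht
    have h3p := three_point hWconv (hF t ht) c (hwmem t ht) (hwopt t ht) (hu t ht)
    have hnn : (0:ℝ) ≤ ‖w t - w (t-1)‖ ^ 2 := by positivity
    simp only [ha, hb]
    nlinarith
  have hsum : ∑ t ∈ Finset.Icc 1 T, (F t (w t) - F t (u t))
      ≤ c * ∑ t ∈ Finset.Icc 1 T, (a t - b t) := by
    rw [Finset.mul_sum]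
    exact Finset.sum_le_sum fun t ht => hstep t ht
  rcases Nat.eq_zero_or_pos T with hT | hT
  · subst hT
    simp only [show Finset.Icc 1 0 = (∅ : Finset ℕ) from rfl,
      show Finset.Icc 2 0 = (∅ : Finset ℕ) from rfl, Finset.sum_empty, mul_zero, add_zero]
    positivity
  · have := telesc a b T hT
    have hbT : 0 ≤ b T := by simp only [hb]; positivity
    calc ∑ t ∈ Finset.Icc 1 T, (F t (w t) - F t (u t))
        ≤ c * ∑ t ∈ Finset.Icc 1 T, (a t - b t) := hsum
      _ = c * (a 1 + ∑ t ∈ Finset.Icc 2 T, (a t - b (t-1)) - b T) := by rw [this]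
      _ ≤ c * (a 1 + ∑ t ∈ Finset.Icc 2 T, (a t - b (t-1))) := by nlinarith
      _ = c * a 1 + c * ∑ t ∈ Finset.Icc 2 T, (a t - b (t-1)) := by ring
      _ = c * ‖u 1 - w 0‖ ^ 2 + c * ∑ t ∈ Finset.Icc 2 T,
            (‖u t - w (t - 1)‖ ^ 2 - ‖u (t - 1) - w (t - 1)‖ ^ 2) := by
          simp only [ha, hb]
end
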